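/- Reduction property of h_N at Bethe roots: let a, d : ℂ → ℂ, κ ∈ ℂ, ζ ∈ (0,π), and let λ₁,…,λ_N satisfy the Bethe equation at λ_s: a(λ_s)·∏_{k=1}^{N} sinh(λ_k − λ_s − iζ) + d(λ_s)·∏_{k=1}^{N} sinh(λ_k − λ_s + iζ) = 0, with d(λ_s) ≠ 0 and all involved sinh-factors for k ≠ s nonzero. Let z₁,…,z_N be complex numbers and define V_±(μ) = ∏_a sinh(μ−λ_a±iζ)/sinh(μ−z_a±iζ) and h_N(z_k) = [κ − V₋(z_k)/V₊(z_k)] / [κ + (−1)^N (a(z_k)/d(z_k)) ∏_a sinh(z_a − z_k − iζ)/sinh(z_k − z_a − iζ)]. Then, for any k, substituting z_k = λ_s yields h_N = 1, provided the denominator is nonzero. -/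

import Mathlib

open Complex Finset

/-- Reduction property of `h_N` at a Bethe root: substituting `z_k = λ_s`
yields `h_N = 1`. -/
theorem hN_reduction_at_bethe_root (N : ℕ) (a d : ℂ → ℂ) (κ : ℂ)
    (ζ : ℝ) (hζ : 0 < ζ ∧ ζ < Real.pi)
    (lam : Fin N → ℂ) (s : Fin N)
    (hBethe : a (lam s) * (∏ t, Complex.sinh (lam t - lam s - Complex.I * ζ)) +
        d (lam s) * (∏ t, Complex.sinh (lam t - lam s + Complex.I * ζ)) = 0)
    (hd : d (lam s) ≠ 0)
    (z : Fin N → ℂ) (k : Fin N) (hzk : z k = lam s)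
    (hBp : (∏ t, Complex.sinh (lam t - lam s + Complex.I * ζ)) ≠ 0)
    (hBm : (∏ t, Complex.sinh (lam t - lam s - Complex.I * ζ)) ≠ 0)
    (hzp : ∀ t, Complex.sinh (z k - z t + Complex.I * ζ) ≠ 0)
    (hzm : ∀ t, Complex.sinh (z k - z t - Complex.I * ζ) ≠ 0)
    (hlp : ∀ t, Complex.sinh (z k - lam t + Complex.I * ζ) ≠ 0)
    (hden : κ + (-1 : ℂ) ^ N * (a (z k) / d (z k)) *
        (∏ t, Complex.sinh (z t - z k - Complex.I * ζ) /
          Complex.sinh (z k - z t - Complex.I * ζ)) ≠ 0) :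
    (κ -
        (∏ t, Complex.sinh (z k - lam t - Complex.I * ζ) /
            Complex.sinh (z k - z t - Complex.I * ζ)) /
          (∏ t, Complex.sinh (z k - lam t + Complex.I * ζ) /
            Complex.sinh (z k - z t + Complex.I * ζ))) /
      (κ + (-1 : ℂ) ^ N * (a (z k) / d (z k)) *
        (∏ t, Complex.sinh (z t - z k - Complex.I * ζ) /
          Complex.sinh (z k - z t - Complex.I * ζ))) = 1 := by
  have neg_prod : ∀ f g : Fin N → ℂ, (∀ t, f t = - g t) →
      (∏ t, f t) = (-1 : ℂ) ^ N * ∏ t, g t := by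
    intro f g h
    calc (∏ t, f t) = ∏ t, (-1 : ℂ) * g t := by
          refine Finset.prod_congr rfl fun t _ => ?_
          rw [h t, neg_one_mul]
      _ = (-1 : ℂ) ^ N * ∏ t, g t := by
          rw [Finset.prod_mul_distrib, Finset.prod_const]
          simp
  set A := a (lam s) with hA
  set D := d (lam s) with hD
  set Pp := ∏ t, Complex.sinh (lam t - lam s + Complex.I * ζ) with hPp
  set Pm := ∏ t, Complex.sinh (lam t - lam s - Complex.I * ζ) with hPm
  have hQp : (∏ t, Complex.sinh (z k - z t + Complex.I * ζ)) ≠ 0 :=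
    Finset.prod_ne_zero_iff.2 fun t _ => hzp t
  have hQm : (∏ t, Complex.sinh (z k - z t - Complex.I * ζ)) ≠ 0 :=
    Finset.prod_ne_zero_iff.2 fun t _ => hzm t
  set Qp := ∏ t, Complex.sinh (z k - z t + Complex.I * ζ) with hQpdef
  set Qm := ∏ t, Complex.sinh (z k - z t - Complex.I * ζ) with hQmdef
  have e1 : (∏ t, Complex.sinh (z k - lam t - Complex.I * ζ)) = (-1 : ℂ) ^ N * Pp := by
    refine neg_prod _ _ fun t => ?_
    rw [hzk, show lam s - lam t - Complex.I * ζ = -(lam t - lam s + Complex.I * ζ) by ring,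
      Complex.sinh_neg]
  have e2 : (∏ t, Complex.sinh (z k - lam t + Complex.I * ζ)) = (-1 : ℂ) ^ N * Pm := by
    refine neg_prod _ _ fun t => ?_
    rw [hzk, show lam s - lam t + Complex.I * ζ = -(lam t - lam s - Complex.I * ζ) by ring,
      Complex.sinh_neg]
  have e3 : (∏ t, Complex.sinh (z t - z k - Complex.I * ζ)) = (-1 : ℂ) ^ N * Qp := by
    refine neg_prod _ _ fun t => ?_
    rw [show z t - z k - Complex.I * ζ = -(z k - z t + Complex.I * ζ) by ring,
      Complex.sinh_neg]
  have hs : (-1 : ℂ) ^ N ≠ 0 := pow_ne_zero _ (by norm_num)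
  have key : (κ -
        (∏ t, Complex.sinh (z k - lam t - Complex.I * ζ) /
            Complex.sinh (z k - z t - Complex.I * ζ)) /
          (∏ t, Complex.sinh (z k - lam t + Complex.I * ζ) /
            Complex.sinh (z k - z t + Complex.I * ζ))) =
      (κ + (-1 : ℂ) ^ N * (a (z k) / d (z k)) *
        (∏ t, Complex.sinh (z t - z k - Complex.I * ζ) /
          Complex.sinh (z k - z t - Complex.I * ζ))) := by
    rw [Finset.prod_div_distrib, Finset.prod_div_distrib, Finset.prod_div_distrib,
      e1, e2, e3, ← hQpdef, ← hQmdef, hzk]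
    rw [sub_eq_add_neg]
    congr 1
    have hsq : (-1:ℂ)^N * (-1:ℂ)^N = 1 := by
      rw [← pow_add, ← two_mul, pow_mul]; norm_num
    field_simp
    rw [eq_div_iff (show d (lam s) ≠ 0 from hd)]
    linear_combination (-1:ℂ)*hBethe - (a (lam s)*Pm)*hsq
  rw [key]
  exact div_self hden
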